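/- For every real number N > 1 there exists a constant C_N > 0, depending only on N, such that for every D ∈ [0,π] and every ξ ∈ [0, π−D] it holds 1 − (1/ω_N)·∫_ξ^{ξ+D} sin^{N−1}(t) dt ≥ C_N · (π − D)^N. -/

import Mathlib

open Real MeasureTheory intervalIntegral

/-- `ω_N = ∫_0^π sin^{N-1}(t) dt`. -/
noncomputable def omegaN (N : ℝ) : ℝ := ∫ t in (0:ℝ)..π, Real.sin t ^ (N - 1)

lemma sinpow_contOn (N : ℝ) (hN1 : 1 < N) :
    ContinuousOn (fun t : ℝ => Real.sin t ^ (N - 1)) (Set.Icc 0 π) :=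
  Real.continuous_sin.continuousOn.rpow_const fun _ _ => Or.inr (by linarith)

lemma sinpow_integrable (N : ℝ) (hN1 : 1 < N) {a b : ℝ} (ha : a ∈ Set.Icc (0:ℝ) π)
    (hb : b ∈ Set.Icc (0:ℝ) π) :
    IntervalIntegrable (fun t : ℝ => Real.sin t ^ (N - 1)) MeasureTheory.volume a b := by
  apply ContinuousOn.intervalIntegrable
  exact (sinpow_contOn N hN1).mono (Set.uIcc_subset_Icc ha hb)

lemma sinpow_nonneg (N : ℝ) {t : ℝ} (h0 : 0 ≤ t) (hπ : t ≤ π) :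
    0 ≤ Real.sin t ^ (N - 1) :=
  Real.rpow_nonneg (Real.sin_nonneg_of_nonneg_of_le_pi h0 hπ) _

lemma key_lower (N : ℝ) (hN1 : 1 < N) {s : ℝ} (hs0 : 0 ≤ s) (hs : s ≤ π / 2) :
    (2 / π) ^ (N - 1) * s ^ N / N ≤ ∫ t in (0:ℝ)..s, Real.sin t ^ (N - 1) := by
  have hπ := Real.pi_pos
  have hsπ : s ≤ π := by linarith
  have hmono : ∀ t ∈ Set.Icc (0:ℝ) s,
      (2 / π) ^ (N - 1) * t ^ (N - 1) ≤ Real.sin t ^ (N - 1) := by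
    intro t ht
    rw [← Real.mul_rpow (by positivity) ht.1]
    exact Real.rpow_le_rpow (mul_nonneg (by positivity) ht.1) (Real.mul_le_sin ht.1 (ht.2.trans hs))
      (by linarith)
  have hint1 : IntervalIntegrable (fun t : ℝ => (2 / π) ^ (N - 1) * t ^ (N - 1))
      MeasureTheory.volume 0 s := by
    apply ContinuousOn.intervalIntegrable
    exact continuousOn_const.mul (continuousOn_id.rpow_const fun _ _ => Or.inr (by linarith))
  have hint2 := sinpow_integrable N hN1 (a := 0) (b := s) ⟨le_refl 0, hπ.le⟩ ⟨hs0, hsπ⟩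
  have hle := intervalIntegral.integral_mono_on hs0 hint1 hint2 hmono
  refine le_trans (le_of_eq ?_) hle
  rw [intervalIntegral.integral_const_mul, integral_rpow (Or.inl (by linarith : (-1:ℝ) < N - 1))]
  have hN : N - 1 + 1 = N := by ring
  rw [hN, Real.zero_rpow (by linarith : N ≠ 0)]
  ring

theorem volume_deficit_lower_bound (N : ℝ) (hN1 : 1 < N) :
    ∃ C : ℝ, 0 < C ∧ ∀ D ξ : ℝ, D ∈ Set.Icc (0:ℝ) π → ξ ∈ Set.Icc 0 (π - D) →
      C * (π - D) ^ N
        ≤ 1 - (∫ t in ξ..(ξ + D), Real.sin t ^ (N - 1)) / omegaN N := by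
  have hπ := Real.pi_pos
  have hN0 : (0:ℝ) < N := by linarith
  set ω := omegaN N with hωdef
  have hω : 0 < ω := by
    apply intervalIntegral.intervalIntegral_pos_of_pos_on
      (sinpow_integrable N hN1 ⟨le_refl 0, hπ.le⟩ ⟨hπ.le, le_refl π⟩) _ hπ
    intro x hx
    exact Real.rpow_pos_of_pos (Real.sin_pos_of_pos_of_lt_pi hx.1 hx.2) _
  refine ⟨(2 / π) ^ (N - 1) / (N * ω * 2 ^ N), by positivity, ?_⟩
  rintro D ξ ⟨hD0, hDπ⟩ ⟨hξ0, hξ⟩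
  have hξπ : ξ ≤ π := by linarith
  have hξD0 : 0 ≤ ξ + D := by linarith
  have hξDπ : ξ + D ≤ π := by linarith
  set A := ∫ t in (0:ℝ)..ξ, Real.sin t ^ (N - 1) with hA
  set I := ∫ t in ξ..(ξ + D), Real.sin t ^ (N - 1) with hI
  set B := ∫ t in (ξ + D)..π, Real.sin t ^ (N - 1) with hB
  have hsplit : A + I + B = ω := by
    rw [hA, hI, hB, hωdef, omegaN,
      intervalIntegral.integral_add_adjacent_intervals
        (sinpow_integrable N hN1 ⟨le_refl 0, hπ.le⟩ ⟨hξ0, hξπ⟩)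
        (sinpow_integrable N hN1 ⟨hξ0, hξπ⟩ ⟨hξD0, hξDπ⟩),
      intervalIntegral.integral_add_adjacent_intervals
        (sinpow_integrable N hN1 ⟨le_refl 0, hπ.le⟩ ⟨hξD0, hξDπ⟩)
        (sinpow_integrable N hN1 ⟨hξD0, hξDπ⟩ ⟨hπ.le, le_refl π⟩)]
  have h1 : 1 - I / ω = (A + B) / ω := by
    rw [eq_div_iff hω.ne', sub_mul, one_mul, div_mul_cancel₀ _ hω.ne']
    linarith
  rw [h1]
  set L := (π - D) / 2 with hL
  have hL0 : 0 ≤ L := by simp [hL]; linarith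
  have hLπ : L ≤ π / 2 := by simp [hL]; linarith
  have hnonneg : ∀ᵐ t ∂(volume.restrict (Set.Ioc (0:ℝ) π)),
      0 ≤ Real.sin t ^ (N - 1) := by
    filter_upwards [MeasureTheory.ae_restrict_mem measurableSet_Ioc] with t ht
    exact sinpow_nonneg N ht.1.le ht.2
  have hkey : (2 / π) ^ (N - 1) * L ^ N / N ≤ A + B := by
    have hkeyL := key_lower N hN1 hL0 hLπ
    rcases le_or_gt L ξ with hcase | hcase
    · -- A ≥ ∫_0^L, B ≥ 0
      have hA' : (∫ t in (0:ℝ)..L, Real.sin t ^ (N - 1)) ≤ A :=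
        intervalIntegral.integral_mono_interval (le_refl 0) hL0 hcase
          (by filter_upwards [MeasureTheory.ae_restrict_mem measurableSet_Ioc] with t ht
              exact sinpow_nonneg N ht.1.le (ht.2.trans hξπ))
          (sinpow_integrable N hN1 ⟨le_refl 0, hπ.le⟩ ⟨hξ0, hξπ⟩)
      have hB' : 0 ≤ B :=
        intervalIntegral.integral_nonneg hξDπ
          (fun t ht => sinpow_nonneg N (hξD0.trans ht.1) ht.2)
      linarith
    · -- B ≥ ∫_0^L via reflection
      have hLle : L ≤ π - (ξ + D) := by
        have : 2 * L = π - D := by rw [hL]; ring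
        linarith
      have hrefl : B = ∫ t in (0:ℝ)..(π - (ξ + D)), Real.sin t ^ (N - 1) := by
        rw [hB]
        have := intervalIntegral.integral_comp_sub_left
          (fun t => Real.sin t ^ (N - 1)) (a := 0) (b := π - (ξ + D)) π
        simp only [sub_zero, sub_sub_cancel] at this
        rw [← this]
        apply intervalIntegral.integral_congr
        intro t _
        simp [Real.sin_pi_sub]
      have hB' : (∫ t in (0:ℝ)..L, Real.sin t ^ (N - 1)) ≤ B := by
        rw [hrefl]
        apply intervalIntegral.integral_mono_interval (le_refl 0) hL0 hLle
          (by filter_upwards [MeasureTheory.ae_restrict_mem measurableSet_Ioc] with t ht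
              exact sinpow_nonneg N ht.1.le (by linarith [ht.2]))
          (sinpow_integrable N hN1 ⟨le_refl 0, hπ.le⟩ ⟨by linarith, by linarith⟩)
      have hA' : 0 ≤ A :=
        intervalIntegral.integral_nonneg hξ0
          (fun t ht => sinpow_nonneg N ht.1 (ht.2.trans hξπ))
      linarith
  have h2N : (0:ℝ) < 2 ^ N := Real.rpow_pos_of_pos (by norm_num) _
  have hLN : L ^ N = (π - D) ^ N / 2 ^ N := by
    rw [hL, Real.div_rpow (by linarith) (by norm_num)]
  have hCeq : (2 / π) ^ (N - 1) / (N * ω * 2 ^ N) * (π - D) ^ N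
      = (2 / π) ^ (N - 1) * L ^ N / N / ω := by
    rw [hLN]
    have key : ∀ P Q R : ℝ, 0 < R → P / (N * ω * R) * Q = P * (Q / R) / N / ω := by
      intro P Q R hR; field_simp
    exact key _ _ _ h2N
  rw [hCeq]
  gcongr
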